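/- arXiv:quant-ph/0509154 — 2 statements merged into one kernel-verified Lean document; each statement's English description precedes it below -/
import Mathlib

section
/- Let μ be a probability measure on ℝ with zero mean (∫ x dμ(x) = 0) and finite second moment V = ∫ x² dμ(x), and let g(t) = ∫ exp(i t x) dμ(x) be its characteristic function. Let (a_n) be any sequence of natural numbers with a_n ≤ n for all n. Then for every x ∈ ℝ, the limit lim_{n→∞} g(x/√n)^{a_n} · g(-x/√n)^{n - a_n} = exp(-V x² / 2) holds. -/
open MeasureTheory Complex Filter
open Topology


lemma exp_taylor_bound_aux (θ : ℝ) :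
    ‖Complex.exp (θ * I) - 1 - θ * I + ((θ^2/2 : ℝ) : ℂ)‖ ≤ min (4 * θ^2) (4 * |θ|^3) := by
  have habs : ‖(θ : ℂ) * I‖ = |θ| := by
    simp
  rcases le_or_gt (|θ|) 1 with h | h
  · have hb := Complex.exp_bound (x := (θ : ℂ) * I) (by simpa [habs]) (n := 3) (by norm_num)
    have hsum : (∑ i ∈ Finset.range 3, ((θ : ℂ) * I) ^ i / i.factorial)
        = 1 + θ * I - ((θ^2/2 : ℝ) : ℂ) := by
      simp [Finset.sum_range_succ, Nat.factorial]
      ring_nf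
      simp [Complex.I_sq]
      ring
    rw [hsum] at hb
    have h2 : Complex.exp (θ*I) - (1 + θ*I - ((θ^2/2 : ℝ):ℂ))
        = Complex.exp (θ * I) - 1 - θ * I + ((θ^2/2 : ℝ) : ℂ) := by ring
    rw [h2, habs] at hb
    have hθ2 : |θ|^3 ≤ θ^2 := by
      have : |θ|^3 ≤ |θ|^2 := pow_le_pow_of_le_one (abs_nonneg θ) h (by norm_num)
      simpa [_root_.sq_abs] using this
    have h0 : (0:ℝ) ≤ |θ|^3 := by positivity
    norm_num [Nat.factorial] at hb
    push_cast at hb ⊢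
    refine le_min (hb.trans ?_) (hb.trans ?_) <;> nlinarith
  · have h1 : θ^2 ≥ 1 := by nlinarith [abs_nonneg θ, _root_.sq_abs θ]
    have hn : ‖Complex.exp (θ * I) - 1 - θ * I + ((θ^2/2 : ℝ) : ℂ)‖
        ≤ 1 + 1 + |θ| + θ^2/2 := by
      have e1 : ‖Complex.exp ((θ:ℂ) * I)‖ = 1 := Complex.norm_exp_ofReal_mul_I θ
      calc ‖Complex.exp (θ * I) - 1 - θ * I + ((θ^2/2 : ℝ) : ℂ)‖
          ≤ ‖Complex.exp (θ * I) - 1 - θ * I‖ + ‖((θ^2/2 : ℝ) : ℂ)‖ := norm_add_le _ _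
        _ ≤ (‖Complex.exp (θ * I) - 1‖ + ‖(θ:ℂ) * I‖) + ‖((θ^2/2 : ℝ) : ℂ)‖ := by
            gcongr; exact norm_sub_le _ _
        _ ≤ ((‖Complex.exp ((θ:ℂ) * I)‖ + ‖(1:ℂ)‖) + ‖(θ:ℂ) * I‖) + ‖((θ^2/2 : ℝ) : ℂ)‖ := by
            gcongr; exact norm_sub_le _ _
        _ ≤ 1 + 1 + |θ| + θ^2/2 := by
            rw [e1, Complex.norm_real, Real.norm_eq_abs,
              _root_.abs_of_nonneg (by positivity : (0:ℝ) ≤ θ^2/2)]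
            simp [habs]
    have hmax : 1 + 1 + |θ| + θ^2/2 ≤ 4*θ^2 := by nlinarith [_root_.sq_abs θ, abs_nonneg θ]
    refine le_min (hn.trans hmax) (hn.trans (hmax.trans ?_))
    have : θ^2 ≤ |θ|^3 := by nlinarith [_root_.sq_abs θ, abs_nonneg θ]
    nlinarith

lemma char_fun_expansion
    (μ : Measure ℝ) [IsProbabilityMeasure μ]
    (hmean : ∫ x, x ∂μ = 0)
    (hmom : Integrable (fun x => x ^ 2) μ)
    (V : ℝ) (hV : V = ∫ x, x ^ 2 ∂μ)
    (g : ℝ → ℂ) (hg : ∀ t : ℝ, g t = ∫ x, Complex.exp ((t * x : ℝ) * Complex.I) ∂μ)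
    (y : ℝ) :
    Tendsto (fun n : ℕ => (n : ℂ) * (g (y / Real.sqrt n) - 1)) atTop
      (𝓝 (-((V * y ^ 2 / 2 : ℝ) : ℂ))) := by
  -- integrability of x
  have hx1 : Integrable (fun x : ℝ => x) μ := by
    refine (integrable_const 1 |>.add hmom).mono' aestronglyMeasurable_id ?_
    filter_upwards with x
    simp only [Real.norm_eq_abs, id, Pi.add_apply]
    rcases le_or_gt (|x|) 1 with h | h
    · nlinarith [sq_nonneg x]
    · nlinarith [_root_.sq_abs x, abs_nonneg x]
  -- the remainder function
  set R : ℝ → ℝ → ℂ := fun t x =>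
    Complex.exp ((t*x : ℝ) * I) - 1 - ((t*x : ℝ) : ℂ) * I + (((t*x)^2/2 : ℝ) : ℂ) with hR
  have hI1 : ∀ t : ℝ, Integrable (fun x => Complex.exp ((t*x : ℝ) * I)) μ := by
    intro t
    refine (integrable_const (1:ℝ)).mono' ?_ ?_
    · exact (Complex.continuous_exp.comp
        ((Complex.continuous_ofReal.comp (continuous_const.mul continuous_id)).mul
          continuous_const)).aestronglyMeasurable
    · filter_upwards with x
      rw [Complex.norm_exp_ofReal_mul_I]
  have hI3 : ∀ t : ℝ, Integrable (fun x => ((t*x : ℝ) : ℂ) * I) μ := by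
    intro t
    have h : (fun x : ℝ => ((t*x : ℝ) : ℂ) * I) = fun x => ((x:ℝ):ℂ) * ((t:ℂ) * I) := by
      funext x; push_cast; ring
    rw [h]
    exact hx1.ofReal.mul_const _
  have hI4 : ∀ t : ℝ, Integrable (fun x => (((t*x)^2/2 : ℝ) : ℂ)) μ := by
    intro t
    have h : (fun x : ℝ => (((t*x)^2/2 : ℝ) : ℂ)) = fun x => ((t^2/2 * x^2 : ℝ) : ℂ) := by
      funext x; norm_num; ring
    rw [h]
    exact (hmom.const_mul _).ofReal
  -- the identity
  have heq : ∀ t : ℝ, g t - 1 + ((V * t^2/2 : ℝ) : ℂ) = ∫ x, R t x ∂μ := by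
    intro t
    have h1 : Integrable (fun x : ℝ =>
        Complex.exp ((t*x : ℝ) * I) - 1 - ((t*x : ℝ) : ℂ) * I) μ :=
      ((hI1 t).sub (integrable_const 1)).sub (hI3 t)
    have h2 : Integrable (fun x : ℝ => Complex.exp ((t*x : ℝ) * I) - 1) μ :=
      (hI1 t).sub (integrable_const 1)
    have e : ∫ x, R t x ∂μ
        = ∫ x, (Complex.exp ((t*x : ℝ) * I) - 1 - ((t*x : ℝ) : ℂ) * I)
            + (((t*x)^2/2 : ℝ) : ℂ) ∂μ := rfl
    rw [e, integral_add h1 (hI4 t), integral_sub h2 (hI3 t),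
      integral_sub (hI1 t) (integrable_const 1), ← hg t]
    have e3 : ∫ x, ((t*x : ℝ) : ℂ) * I ∂μ = 0 := by
      rw [integral_mul_const]
      have hz : ∫ x, ((t*x : ℝ) : ℂ) ∂μ = ((∫ x, t*x ∂μ : ℝ) : ℂ) := by
        simpa using Complex.ofRealCLM.integral_comp_comm (hx1.const_mul t)
      rw [hz, integral_const_mul, hmean, mul_zero, Complex.ofReal_zero, zero_mul]
    have e4 : ∫ x, (((t*x)^2/2 : ℝ) : ℂ) ∂μ = ((V * t^2/2 : ℝ) : ℂ) := by
      have h4 : (fun x : ℝ => (((t*x)^2/2 : ℝ) : ℂ)) = fun x => ((t^2/2 * x^2 : ℝ) : ℂ) := by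
        funext x; norm_num; ring
      have hz4 : ∫ x, ((t^2/2 * x^2 : ℝ) : ℂ) ∂μ = ((∫ x, t^2/2 * x^2 ∂μ : ℝ) : ℂ) := by
        have h5 := Complex.ofRealCLM.integral_comp_comm (hmom.const_mul (t^2/2))
        simp only [Complex.ofRealCLM_apply] at h5
        exact h5
      rw [h4, hz4, integral_const_mul, ← hV]
      push_cast
      ring
    rw [e3, e4]
    have e1 : ∫ _x : ℝ, (1:ℂ) ∂μ = 1 := by simp
    rw [e1]
    ring
  -- bound on the remainder integral
  set Em : ℝ → ℝ := fun t => ∫ x, min (4 * x^2) (4 * |t| * |x|^3) ∂μ with hEm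
  have hminint : ∀ t : ℝ, Integrable (fun x : ℝ => min (4 * x^2) (4 * |t| * |x|^3)) μ := by
    intro t
    refine (hmom.const_mul 4).mono' ?_ ?_
    · exact ((continuous_const.mul (continuous_pow 2)).min
        ((continuous_const.mul ((_root_.continuous_abs).pow 3)))).aestronglyMeasurable
    · filter_upwards with x
      rw [Real.norm_eq_abs, _root_.abs_of_nonneg (le_min (by positivity) (by positivity))]
      exact min_le_left _ _
  have hbound : ∀ t : ℝ, ‖g t - 1 + ((V * t^2/2 : ℝ) : ℂ)‖ ≤ t^2 * Em t := by
    intro t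
    rw [heq t, hEm]
    refine (norm_integral_le_integral_norm _).trans ?_
    simp only
    rw [← integral_const_mul]
    refine integral_mono_of_nonneg (Filter.Eventually.of_forall fun x => norm_nonneg _)
      ((hminint t).const_mul _) (Filter.Eventually.of_forall fun x => ?_)
    beta_reduce
    have hb := exp_taylor_bound_aux (t*x)
    refine hb.trans ?_
    have harith1 : 4 * (t*x)^2 = t^2 * (4 * x^2) := by ring
    have harith2 : 4 * |t*x|^3 = t^2 * (4 * |t| * |x|^3) := by
      rw [abs_mul, mul_pow]
      have h3 : |t|^3 = t^2 * |t| := by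
        rw [pow_succ, _root_.sq_abs]
      rw [h3]; ring
    rw [harith1, harith2]
    rcases le_total (t^2 * (4 * x^2)) (t^2 * (4 * |t| * |x|^3)) with h | h
    · rw [min_eq_left h]
      rcases le_total (4 * x^2) (4 * |t| * |x|^3) with h' | h'
      · rw [min_eq_left h']
      · rw [min_eq_right h']; exact h
    · rw [min_eq_right h]
      rcases le_total (4 * x^2) (4 * |t| * |x|^3) with h' | h'
      · rw [min_eq_left h']; exact h
      · rw [min_eq_right h']
  -- t_n tends to zero
  have hsqrt : Tendsto (fun n : ℕ => Real.sqrt n) atTop atTop := by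
    have h1 : Tendsto (fun x : ℝ => x ^ (1/2 : ℝ)) atTop atTop :=
      tendsto_rpow_atTop (by norm_num)
    have h2 : Tendsto ((fun x : ℝ => x ^ (1/2 : ℝ)) ∘ (fun n : ℕ => (n:ℝ))) atTop atTop :=
      h1.comp tendsto_natCast_atTop_atTop
    refine h2.congr fun n => ?_
    simp only [Function.comp_apply]
    rw [← Real.sqrt_eq_rpow]
  have htn : Tendsto (fun n : ℕ => y / Real.sqrt n) atTop (𝓝 0) :=
    Tendsto.div_atTop tendsto_const_nhds hsqrt
  -- E(t_n) → 0 by dominated convergence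
  have hE : Tendsto (fun n : ℕ => Em (y / Real.sqrt n)) atTop (𝓝 0) := by
    have h0 : Tendsto (fun n : ℕ => ∫ x, min (4 * x^2) (4 * |y / Real.sqrt n| * |x|^3) ∂μ)
        atTop (𝓝 (∫ _x : ℝ, (0:ℝ) ∂μ)) := by
      refine tendsto_integral_filter_of_dominated_convergence (fun x => 4 * x^2)
        (Filter.Eventually.of_forall fun n => ((continuous_const.mul (continuous_pow 2)).min
          ((continuous_const.mul ((_root_.continuous_abs).pow 3)))).aestronglyMeasurable)
        (Filter.Eventually.of_forall fun n => Filter.Eventually.of_forall fun x => ?_)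
        (hmom.const_mul 4)
        (Filter.Eventually.of_forall fun x => ?_)
      · rw [Real.norm_eq_abs, _root_.abs_of_nonneg (le_min (by positivity) (by positivity))]
        exact min_le_left _ _
      · have hb : Tendsto (fun n : ℕ => 4 * |y / Real.sqrt n| * |x|^3) atTop (𝓝 0) := by
          have := ((htn.abs.const_mul 4).mul_const (|x|^3))
          simpa using this
        exact squeeze_zero (fun n => le_min (by positivity) (by positivity))
          (fun n => min_le_right _ _) hb
    simpa using h0
  -- conclusion
  rcases eq_or_ne y 0 with hy | hy
  · subst hy
    have hg0 : g 0 = 1 := by rw [hg 0]; simp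
    have hzf : (fun n : ℕ => (n:ℂ) * (g (0 / Real.sqrt n) - 1)) = fun _ => 0 := by
      funext n; rw [zero_div, hg0]; ring
    rw [hzf]
    simpa using (tendsto_const_nhds : Tendsto (fun _ : ℕ => (0:ℂ)) atTop (𝓝 0))
  · rw [tendsto_iff_norm_sub_tendsto_zero]
    have hEb : Tendsto (fun n : ℕ => y^2 * Em (y / Real.sqrt n)) atTop (𝓝 0) := by
      simpa using hE.const_mul (y^2)
    refine squeeze_zero' (Filter.Eventually.of_forall fun n => norm_nonneg _) ?_ hEb
    filter_upwards [eventually_ge_atTop 1] with n hn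
    have hn0 : (n:ℝ) ≠ 0 := by
      exact Nat.cast_ne_zero.2 (by omega)
    set t := y / Real.sqrt n with htdef
    have ht2 : (n:ℝ) * t^2 = y^2 := by
      rw [htdef, div_pow, Real.sq_sqrt (Nat.cast_nonneg n)]
      field_simp
    have hcast : (n:ℂ) * ((V * t^2/2 : ℝ):ℂ) = ((V * y^2/2 : ℝ):ℂ) := by
      rw [← ht2]; push_cast; ring
    have hkey : (n:ℂ) * (g t - 1) - (-((V * y^2/2 : ℝ):ℂ))
        = (n:ℂ) * (g t - 1 + ((V * t^2/2 : ℝ):ℂ)) := by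
      rw [← hcast]; ring
    rw [hkey, norm_mul]
    have hnn : ‖(n:ℂ)‖ = (n:ℝ) := by simp
    rw [hnn]
    calc (n:ℝ) * ‖g t - 1 + ((V * t^2/2 : ℝ):ℂ)‖ ≤ (n:ℝ) * (t^2 * Em t) :=
          mul_le_mul_of_nonneg_left (hbound t) (Nat.cast_nonneg n)
      _ = y^2 * Em t := by rw [← mul_assoc, ht2]

lemma tendsto_one_of_mul_sub {z : ℕ → ℂ} {L : ℂ}
    (h : Tendsto (fun n : ℕ => (n:ℂ) * (z n - 1)) atTop (𝓝 L)) :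
    Tendsto z atTop (𝓝 1) := by
  have hinv : Tendsto (fun n : ℕ => ((n:ℂ))⁻¹) atTop (𝓝 0) := by
    refine squeeze_zero_norm (a := fun n : ℕ => ((n:ℝ))⁻¹) (fun n => ?_)
      (tendsto_inv_atTop_zero.comp tendsto_natCast_atTop_atTop)
    rw [norm_inv]
    simp
  have hz0 : Tendsto (fun n : ℕ => z n - 1) atTop (𝓝 0) := by
    have hm := h.mul hinv
    rw [mul_zero] at hm
    refine hm.congr' ?_
    filter_upwards [eventually_ge_atTop 1] with n hn
    have hn0 : (n:ℂ) ≠ 0 := Nat.cast_ne_zero.2 (by omega)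
    field_simp
  have := hz0.add (tendsto_const_nhds (x := (1:ℂ)))
  simpa using this

lemma log_lim {z : ℕ → ℂ} {L : ℂ}
    (h : Tendsto (fun n : ℕ => (n:ℂ) * (z n - 1)) atTop (𝓝 L)) :
    Tendsto (fun n : ℕ => (n:ℂ) * Complex.log (z n)) atTop (𝓝 L) := by
  have h1 := tendsto_one_of_mul_sub h
  have hz0 : Tendsto (fun n : ℕ => z n - 1) atTop (𝓝 0) := by
    simpa using h1.sub (tendsto_const_nhds (x := (1:ℂ)))
  have hsmall : ∀ᶠ n in atTop, ‖z n - 1‖ ≤ 1/2 := by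
    have := hz0.norm
    simp only [norm_zero] at this
    exact (this.eventually_lt_const (by norm_num)).mono fun n hn => hn.le
  have hd : Tendsto (fun n : ℕ => (n:ℂ) * Complex.log (z n) - (n:ℂ) * (z n - 1))
      atTop (𝓝 0) := by
    have hbnd : Tendsto (fun n : ℕ => ‖(n:ℂ) * (z n - 1)‖ * ‖z n - 1‖) atTop (𝓝 0) := by
      have := h.norm.mul hz0.norm
      simpa using this
    refine squeeze_zero_norm' ?_ hbnd
    filter_upwards [hsmall] with n hn
    have hlog : ‖Complex.log (z n) - (z n - 1)‖ ≤ ‖z n - 1‖^2 := by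
      have hlt : ‖z n - 1‖ < 1 := lt_of_le_of_lt hn (by norm_num)
      have hb := Complex.norm_log_one_add_sub_self_le hlt
      have he : (1 : ℂ) + (z n - 1) = z n := by ring
      rw [he] at hb
      refine hb.trans ?_
      have h0 : (1 - ‖z n - 1‖)⁻¹ ≤ 2 := by
        rw [inv_le_comm₀ (by linarith) (by norm_num)]
        linarith
      have hnn : (0:ℝ) ≤ ‖z n - 1‖^2 := sq_nonneg _
      calc ‖z n - 1‖^2 * (1 - ‖z n - 1‖)⁻¹ / 2 ≤ ‖z n - 1‖^2 * 2 / 2 := by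
            gcongr
        _ = ‖z n - 1‖^2 := by ring
    calc ‖(n:ℂ) * Complex.log (z n) - (n:ℂ) * (z n - 1)‖
        = ‖(n:ℂ)‖ * ‖Complex.log (z n) - (z n - 1)‖ := by
          rw [← norm_mul]; ring_nf
      _ ≤ ‖(n:ℂ)‖ * ‖z n - 1‖^2 := by
          gcongr
      _ = ‖(n:ℂ) * (z n - 1)‖ * ‖z n - 1‖ := by
          rw [norm_mul]; ring
  have := hd.add h
  rw [zero_add] at this
  refine this.congr fun n => ?_
  ring

/-- **Central-limit-type convergence for products of characteristic function values.**
If `μ` is a probability measure on `ℝ` with zero mean and finite second moment `V`,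
`g` its characteristic function, and `a_n ≤ n` an arbitrary sequence, then for every `x`,
`g(x/√n)^{a_n} · g(-x/√n)^{n-a_n} → exp(-V x² / 2)` as `n → ∞`. -/
theorem char_fun_clt_limit
    (μ : Measure ℝ) [IsProbabilityMeasure μ]
    (hmean : ∫ x, x ∂μ = 0)
    (hmom : Integrable (fun x => x ^ 2) μ)
    (V : ℝ) (hV : V = ∫ x, x ^ 2 ∂μ)
    (g : ℝ → ℂ) (hg : ∀ t : ℝ, g t = ∫ x, Complex.exp ((t * x : ℝ) * Complex.I) ∂μ)
    (a : ℕ → ℕ) (ha : ∀ n, a n ≤ n) (x : ℝ) :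
    Tendsto
      (fun n : ℕ => g (x / Real.sqrt n) ^ (a n) * g (-x / Real.sqrt n) ^ (n - a n))
      atTop (nhds (Complex.exp (-((V * x ^ 2 / 2 : ℝ) : ℂ)))) := by
  set L : ℂ := -((V * x ^ 2 / 2 : ℝ) : ℂ) with hL
  have hA : Tendsto (fun n : ℕ => (n : ℂ) * (g (x / Real.sqrt n) - 1)) atTop (𝓝 L) :=
    char_fun_expansion μ hmean hmom V hV g hg x
  have hB : Tendsto (fun n : ℕ => (n : ℂ) * (g (-x / Real.sqrt n) - 1)) atTop (𝓝 L) := by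
    have h := char_fun_expansion μ hmean hmom V hV g hg (-x)
    rw [neg_sq] at h
    exact h
  have hA' := log_lim hA
  have hB' := log_lim hB
  have h1A := tendsto_one_of_mul_sub hA
  have h1B := tendsto_one_of_mul_sub hB
  -- convergence of the sum of logs
  have hS : Tendsto (fun n : ℕ => (a n : ℂ) * Complex.log (g (x / Real.sqrt n))
      + ((n - a n : ℕ) : ℂ) * Complex.log (g (-x / Real.sqrt n))) atTop (𝓝 L) := by
    rw [tendsto_iff_norm_sub_tendsto_zero]
    have hb : Tendsto (fun n : ℕ => ‖(n:ℂ) * Complex.log (g (x / Real.sqrt n)) - L‖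
        + ‖(n:ℂ) * Complex.log (g (-x / Real.sqrt n)) - L‖) atTop (𝓝 0) := by
      have := (tendsto_iff_norm_sub_tendsto_zero.mp hA').add
        (tendsto_iff_norm_sub_tendsto_zero.mp hB')
      simpa using this
    refine squeeze_zero' (Filter.Eventually.of_forall fun n => norm_nonneg _) ?_ hb
    filter_upwards [eventually_ge_atTop 1] with n hn
    have hn0 : (n:ℂ) ≠ 0 := Nat.cast_ne_zero.2 (by omega)
    have hsum : (a n : ℂ) + ((n - a n : ℕ) : ℂ) = (n:ℂ) := by
      rw [Nat.cast_sub (ha n)]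
      ring
    set A := Complex.log (g (x / Real.sqrt n)) with hAdef
    set B := Complex.log (g (-x / Real.sqrt n)) with hBdef
    have hsplit : (a n : ℂ) * A + ((n - a n : ℕ) : ℂ) * B - L
        = ((a n : ℂ)/(n:ℂ)) * ((n:ℂ) * A - L)
          + (((n - a n : ℕ) : ℂ)/(n:ℂ)) * ((n:ℂ) * B - L) := by
      have h3 : ((a n:ℂ)/(n:ℂ))*L + (((n - a n : ℕ):ℂ)/(n:ℂ))*L = L := by
        rw [div_mul_eq_mul_div, div_mul_eq_mul_div, ← add_div, ← add_mul, hsum]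
        exact mul_div_cancel_left₀ L hn0
      have h4 : ((a n : ℂ)/(n:ℂ)) * ((n:ℂ) * A) = (a n : ℂ) * A := by
        field_simp
      have h5 : (((n - a n : ℕ) : ℂ)/(n:ℂ)) * ((n:ℂ) * B) = ((n - a n : ℕ) : ℂ) * B := by
        field_simp
      have h6 : ((a n : ℂ)/(n:ℂ)) * ((n:ℂ) * A - L)
          + (((n - a n : ℕ) : ℂ)/(n:ℂ)) * ((n:ℂ) * B - L)
          = (((a n : ℂ)/(n:ℂ)) * ((n:ℂ) * A) + (((n - a n : ℕ):ℂ)/(n:ℂ)) * ((n:ℂ) * B))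
            - (((a n:ℂ)/(n:ℂ))*L + (((n - a n : ℕ):ℂ)/(n:ℂ))*L) := by ring
      rw [h6, h4, h5, h3]
    rw [hsplit]
    have hq1 : ‖(a n : ℂ)/(n:ℂ)‖ ≤ 1 := by
      rw [norm_div]
      simp only [Complex.norm_natCast]
      rw [div_le_one (by exact_mod_cast Nat.pos_of_ne_zero (by omega))]
      exact_mod_cast ha n
    have hq2 : ‖((n - a n : ℕ) : ℂ)/(n:ℂ)‖ ≤ 1 := by
      rw [norm_div]
      simp only [Complex.norm_natCast]
      rw [div_le_one (by exact_mod_cast Nat.pos_of_ne_zero (by omega))]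
      exact_mod_cast Nat.sub_le n (a n)
    calc ‖((a n : ℂ)/(n:ℂ)) * ((n:ℂ) * A - L)
          + (((n - a n : ℕ) : ℂ)/(n:ℂ)) * ((n:ℂ) * B - L)‖
        ≤ ‖((a n : ℂ)/(n:ℂ)) * ((n:ℂ) * A - L)‖
          + ‖(((n - a n : ℕ) : ℂ)/(n:ℂ)) * ((n:ℂ) * B - L)‖ := norm_add_le _ _
      _ = ‖(a n : ℂ)/(n:ℂ)‖ * ‖(n:ℂ) * A - L‖
          + ‖((n - a n : ℕ) : ℂ)/(n:ℂ)‖ * ‖(n:ℂ) * B - L‖ := by rw [norm_mul, norm_mul]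
      _ ≤ 1 * ‖(n:ℂ) * A - L‖ + 1 * ‖(n:ℂ) * B - L‖ := by
          gcongr
      _ = ‖(n:ℂ) * A - L‖ + ‖(n:ℂ) * B - L‖ := by ring
  -- conclude
  have hfinal : Tendsto (fun n : ℕ => Complex.exp ((a n : ℂ)
      * Complex.log (g (x / Real.sqrt n))
      + ((n - a n : ℕ) : ℂ) * Complex.log (g (-x / Real.sqrt n)))) atTop
      (𝓝 (Complex.exp L)) :=
    (Complex.continuous_exp.continuousAt.tendsto).comp hS
  refine hfinal.congr' ?_
  filter_upwards [h1A.eventually_ne (by norm_num : (1:ℂ) ≠ 0),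
    h1B.eventually_ne (by norm_num : (1:ℂ) ≠ 0)] with n hne1 hne2
  rw [Complex.exp_add, Complex.exp_nat_mul, Complex.exp_nat_mul,
    Complex.exp_log hne1, Complex.exp_log hne2]
end

section
/- Let E be a finite-dimensional real inner product space, μ a probability measure on E, and ξ ∈ E a fixed vector such that ∫ ⟪ξ, y⟫ dμ(y) = 0 and v = ∫ ⟪ξ, y⟫² dμ(y) < ∞. Denote by χ(η) = ∫ exp(i ⟪η, y⟫) dμ(y) the characteristic function of μ. Then for any sequence of natural numbers (a_n) with a_n ≤ n for all n, lim_{n→∞} χ(ξ/√n)^{a_n} · χ(-ξ/√n)^{n - a_n} = exp(-v/2). -/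
open MeasureTheory Complex Filter


lemma hasDerivAt_expI (s : ℝ) :
    HasDerivAt (fun t : ℝ => Complex.exp (t * Complex.I))
      (Complex.I * Complex.exp (s * Complex.I)) s := by
  have h : HasDerivAt (fun z : ℂ => Complex.exp (z * Complex.I))
      (Complex.exp ((s : ℂ) * Complex.I) * Complex.I) (s : ℂ) := by
    simpa using (((hasDerivAt_id (s : ℂ)).mul_const Complex.I).cexp)
  simpa [mul_comm] using h.comp_ofReal

lemma norm_expI_sub_one_le (x : ℝ) : ‖Complex.exp (x * Complex.I) - 1‖ ≤ |x| := by
  have key : Complex.exp (x * Complex.I) - 1 =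
      ∫ s in (0:ℝ)..x, Complex.I * Complex.exp (s * Complex.I) := by
    have h2 : IntervalIntegrable (fun s : ℝ => Complex.I * Complex.exp (s * Complex.I))
        MeasureTheory.volume 0 x := Continuous.intervalIntegrable (by fun_prop) _ _
    have := intervalIntegral.integral_eq_sub_of_hasDerivAt
      (f := fun t : ℝ => Complex.exp (t * Complex.I)) (a := 0) (b := x)
      (fun s _ => hasDerivAt_expI s) h2
    rw [this]
    simp
  rw [key]
  have := intervalIntegral.norm_integral_le_abs_of_norm_le
    (f := fun s : ℝ => Complex.I * Complex.exp (s * Complex.I))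
    (g := fun _ : ℝ => (1:ℝ)) (μ := MeasureTheory.volume) (a := 0) (b := x) ?_ ?_
  · simpa using this
  · filter_upwards with t
    simp [Complex.norm_exp_ofReal_mul_I]
  · exact intervalIntegrable_const

lemma norm_expI_taylor1_le (x : ℝ) :
    ‖Complex.exp (x * Complex.I) - 1 - x * Complex.I‖ ≤ x ^ 2 / 2 := by
  have hderiv : ∀ s : ℝ, HasDerivAt
      (fun t : ℝ => Complex.exp (t * Complex.I) - 1 - t * Complex.I)
      (Complex.I * (Complex.exp (s * Complex.I) - 1)) s := by
    intro s
    have h1 : HasDerivAt (fun t : ℝ => (t : ℂ) * Complex.I) Complex.I s := by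
      simpa using (Complex.ofRealCLM.hasDerivAt (x := s)).mul_const Complex.I
    exact (((hasDerivAt_expI s).sub_const 1).sub h1).congr_deriv (by ring)
  have h2 : IntervalIntegrable
      (fun s : ℝ => Complex.I * (Complex.exp (s * Complex.I) - 1))
      MeasureTheory.volume 0 x := Continuous.intervalIntegrable (by fun_prop) _ _
  have key := intervalIntegral.integral_eq_sub_of_hasDerivAt
      (f := fun t : ℝ => Complex.exp (t * Complex.I) - 1 - t * Complex.I) (a := 0) (b := x)
      (fun s _ => hderiv s) h2
  simp only [Complex.ofReal_zero, zero_mul, Complex.exp_zero, sub_self, sub_zero] at key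
  rw [← key]
  have hb : ∀ s : ℝ, ‖Complex.I * (Complex.exp (s * Complex.I) - 1)‖ ≤ |s| := by
    intro s
    calc ‖Complex.I * (Complex.exp (s * Complex.I) - 1)‖
        = ‖Complex.exp (s * Complex.I) - 1‖ := by simp
      _ ≤ |s| := norm_expI_sub_one_le s
  rcases le_total 0 x with hx | hx
  · have := intervalIntegral.norm_integral_le_abs_of_norm_le
      (f := fun s : ℝ => Complex.I * (Complex.exp (s * Complex.I) - 1))
      (g := fun s : ℝ => s) (μ := MeasureTheory.volume) (a := 0) (b := x) ?_ ?_
    · rw [integral_id] at this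
      calc ‖_‖ ≤ |(x ^ 2 - 0 ^ 2) / 2| := this
        _ = x ^ 2 / 2 := by rw [_root_.abs_of_nonneg (by nlinarith [sq_nonneg x])]; ring
    · rw [Set.uIoc_of_le hx]
      filter_upwards [MeasureTheory.ae_restrict_mem measurableSet_Ioc] with t ht
      exact (hb t).trans_eq (abs_of_nonneg ht.1.le)
    · exact Continuous.intervalIntegrable (by fun_prop) _ _
  · have := intervalIntegral.norm_integral_le_abs_of_norm_le
      (f := fun s : ℝ => Complex.I * (Complex.exp (s * Complex.I) - 1))
      (g := fun s : ℝ => -s) (μ := MeasureTheory.volume) (a := 0) (b := x) ?_ ?_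
    · rw [_root_.intervalIntegral.integral_neg, integral_id] at this
      calc ‖_‖ ≤ |-((x ^ 2 - 0 ^ 2) / 2)| := this
        _ = x ^ 2 / 2 := by rw [_root_.abs_neg, _root_.abs_of_nonneg (by nlinarith [sq_nonneg x])]; ring
    · rw [Set.uIoc_of_ge hx]
      filter_upwards [MeasureTheory.ae_restrict_mem measurableSet_Ioc] with t ht
      exact (hb t).trans_eq (abs_of_nonpos ht.2)
    · exact Continuous.intervalIntegrable (by fun_prop) _ _

lemma norm_expI_taylor2_le (x : ℝ) :
    ‖Complex.exp (x * Complex.I) - 1 - x * Complex.I + (x : ℂ) ^ 2 / 2‖ ≤ |x| ^ 3 / 6 := by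
  have hderiv : ∀ s : ℝ, HasDerivAt
      (fun t : ℝ => Complex.exp (t * Complex.I) - 1 - t * Complex.I + (t : ℂ) ^ 2 / 2)
      (Complex.I * (Complex.exp (s * Complex.I) - 1 - s * Complex.I)) s := by
    intro s
    have h0 : HasDerivAt (fun t : ℝ => (t : ℂ)) 1 s := by
      exact (Complex.ofRealCLM.hasDerivAt (x := s))
    have h1 : HasDerivAt (fun t : ℝ => (t : ℂ) * Complex.I) Complex.I s := by
      simpa using h0.mul_const Complex.I
    have h2 : HasDerivAt (fun t : ℝ => (t : ℂ) ^ 2 / 2) (s : ℂ) s := by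
      have h := (h0.mul h0).div_const 2
      have hfn : (fun t : ℝ => (t : ℂ) ^ 2 / 2) = fun t : ℝ => ((t : ℂ) * t) / 2 := by
        funext t; ring
      rw [hfn]
      exact h.congr_deriv (by ring)
    have := (((hasDerivAt_expI s).sub_const 1).sub h1).add h2
    refine this.congr_deriv ?_
    ring_nf
    rw [Complex.I_sq]
    ring
  have h2int : IntervalIntegrable
      (fun s : ℝ => Complex.I * (Complex.exp (s * Complex.I) - 1 - s * Complex.I))
      MeasureTheory.volume 0 x := Continuous.intervalIntegrable (by fun_prop) _ _
  have key := intervalIntegral.integral_eq_sub_of_hasDerivAt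
      (f := fun t : ℝ => Complex.exp (t * Complex.I) - 1 - t * Complex.I + (t : ℂ) ^ 2 / 2)
      (a := 0) (b := x) (fun s _ => hderiv s) h2int
  simp only [Complex.ofReal_zero, zero_mul, Complex.exp_zero, sub_self, sub_zero,
    ne_eq, OfNat.ofNat_ne_zero, not_false_eq_true, zero_pow, zero_div, add_zero] at key
  rw [← key]
  have := intervalIntegral.norm_integral_le_abs_of_norm_le
    (f := fun s : ℝ => Complex.I * (Complex.exp (s * Complex.I) - 1 - s * Complex.I))
    (g := fun s : ℝ => s ^ 2 / 2) (μ := MeasureTheory.volume) (a := 0) (b := x) ?_ ?_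
  · rw [intervalIntegral.integral_div, integral_pow] at this
    refine this.trans_eq ?_
    norm_num
    rw [_root_.abs_div, _root_.abs_div, _root_.abs_pow]
    simp [abs_of_nonneg]
    ring
  · filter_upwards with t
    calc ‖Complex.I * (Complex.exp (t * Complex.I) - 1 - t * Complex.I)‖
        = ‖Complex.exp (t * Complex.I) - 1 - t * Complex.I‖ := by simp
      _ ≤ t ^ 2 / 2 := norm_expI_taylor1_le t
  · exact Continuous.intervalIntegrable (by fun_prop) _ _

lemma norm_expI_taylor_le_min (x : ℝ) :
    ‖Complex.exp (x * Complex.I) - 1 - x * Complex.I + (x : ℂ) ^ 2 / 2‖ ≤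
      min (x ^ 2) (|x| ^ 3 / 6) := by
  refine le_min ?_ (norm_expI_taylor2_le x)
  calc ‖Complex.exp (x * Complex.I) - 1 - x * Complex.I + (x : ℂ) ^ 2 / 2‖
      ≤ ‖Complex.exp (x * Complex.I) - 1 - x * Complex.I‖ + ‖(x : ℂ) ^ 2 / 2‖ :=
        norm_add_le _ _
    _ ≤ x ^ 2 / 2 + x ^ 2 / 2 := by
        refine add_le_add (norm_expI_taylor1_le x) ?_
        rw [norm_div, norm_pow]
        simp [Complex.norm_real, sq_abs]
    _ = x ^ 2 := by ring

lemma charFun_taylor_bound {E : Type*} [MeasurableSpace E]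
    (ν : MeasureTheory.Measure E) [MeasureTheory.IsProbabilityMeasure ν]
    (f : E → ℝ) (hf : MeasureTheory.Integrable f ν)
    (hf2 : MeasureTheory.Integrable (fun y => f y ^ 2) ν)
    (hmean : ∫ y, f y ∂ν = 0) :
    ‖(∫ y, Complex.exp ((f y : ℂ) * Complex.I) ∂ν) - 1 +
        ((∫ y, f y ^ 2 ∂ν : ℝ) : ℂ) / 2‖ ≤
      ∫ y, min (f y ^ 2) (|f y| ^ 3 / 6) ∂ν := by
  have hmeas := hf.aestronglyMeasurable
  have hexp : MeasureTheory.Integrable (fun y => Complex.exp ((f y : ℂ) * Complex.I)) ν := by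
    refine MeasureTheory.Integrable.mono' (MeasureTheory.integrable_const (1 : ℝ))
      (Continuous.comp_aestronglyMeasurable
        (g := fun x : ℝ => Complex.exp ((x : ℂ) * Complex.I)) (by fun_prop) hmeas) ?_
    filter_upwards with y
    simp [Complex.norm_exp_ofReal_mul_I]
  have h1 : MeasureTheory.Integrable (fun y => (f y : ℂ) * Complex.I) ν :=
    hf.ofReal.mul_const Complex.I
  have h2 : MeasureTheory.Integrable (fun y => (f y : ℂ) ^ 2 / 2) ν := by
    have : MeasureTheory.Integrable (fun y => ((f y ^ 2 : ℝ) : ℂ) / 2) ν :=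
      hf2.ofReal.div_const 2
    refine this.congr ?_
    filter_upwards with y
    push_cast
    ring
  have hB : MeasureTheory.Integrable
      (fun y => Complex.exp ((f y : ℂ) * Complex.I) - 1) ν := by
    exact hexp.sub (MeasureTheory.integrable_const 1)
  have hA : MeasureTheory.Integrable
      (fun y => Complex.exp ((f y : ℂ) * Complex.I) - 1 - (f y : ℂ) * Complex.I) ν := by
    exact hB.sub h1
  have hg : MeasureTheory.Integrable
      (fun y => Complex.exp ((f y : ℂ) * Complex.I) - 1 - (f y : ℂ) * Complex.I +
        (f y : ℂ) ^ 2 / 2) ν := by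
    exact hA.add h2
  have hint : (∫ y, (Complex.exp ((f y : ℂ) * Complex.I) - 1 - (f y : ℂ) * Complex.I +
        (f y : ℂ) ^ 2 / 2) ∂ν) =
      (∫ y, Complex.exp ((f y : ℂ) * Complex.I) ∂ν) - 1 +
        ((∫ y, f y ^ 2 ∂ν : ℝ) : ℂ) / 2 := by
    rw [MeasureTheory.integral_add hA h2, MeasureTheory.integral_sub hB h1,
      MeasureTheory.integral_sub hexp (MeasureTheory.integrable_const 1)]
    have e1 : (∫ y, (f y : ℂ) * Complex.I ∂ν) = 0 := by
      rw [MeasureTheory.integral_mul_const]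
      have e0 : (∫ y, ((f y : ℝ) : ℂ) ∂ν) = ((∫ y, f y ∂ν : ℝ) : ℂ) := _root_.integral_ofReal
      rw [e0, hmean]
      simp
    have e2 : (∫ y, (f y : ℂ) ^ 2 / 2 ∂ν) = ((∫ y, f y ^ 2 ∂ν : ℝ) : ℂ) / 2 := by
      rw [MeasureTheory.integral_div]
      congr 1
      have e0 : (∫ y, ((f y ^ 2 : ℝ) : ℂ) ∂ν) = ((∫ y, f y ^ 2 ∂ν : ℝ) : ℂ) :=
        _root_.integral_ofReal
      rw [← e0]
      apply MeasureTheory.integral_congr_ae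
      filter_upwards with y
      push_cast
      ring
    rw [e1, e2]
    simp
  rw [← hint]
  have hmin : MeasureTheory.Integrable (fun y => min (f y ^ 2) (|f y| ^ 3 / 6)) ν := by
    refine MeasureTheory.Integrable.mono' hf2
      (Continuous.comp_aestronglyMeasurable
        (g := fun x : ℝ => min (x ^ 2) (|x| ^ 3 / 6)) (by fun_prop) hmeas) ?_
    filter_upwards with y
    rw [Real.norm_eq_abs, _root_.abs_of_nonneg (le_min (by positivity) (by positivity))]
    exact min_le_left _ _
  calc ‖∫ y, (Complex.exp ((f y : ℂ) * Complex.I) - 1 - (f y : ℂ) * Complex.I +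
        (f y : ℂ) ^ 2 / 2) ∂ν‖
      ≤ ∫ y, ‖Complex.exp ((f y : ℂ) * Complex.I) - 1 - (f y : ℂ) * Complex.I +
        (f y : ℂ) ^ 2 / 2‖ ∂ν := MeasureTheory.norm_integral_le_integral_norm _
    _ ≤ ∫ y, min (f y ^ 2) (|f y| ^ 3 / 6) ∂ν := by
        refine MeasureTheory.integral_mono hg.norm hmin ?_
        intro y
        exact norm_expI_taylor_le_min (f y)

set_option maxHeartbeats 1600000 in
/-- **Directional central-limit convergence of the characteristic function.**
Let `E` be a finite-dimensional real inner product space, `μ` a probability measure on `E`,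
and `ξ ∈ E` with `∫ ⟪ξ,y⟫ dμ = 0` and finite directional second moment
`v = ∫ ⟪ξ,y⟫² dμ`. Then for any sequence `a_n ≤ n`,
`χ(ξ/√n)^{a_n} · χ(-ξ/√n)^{n-a_n} → exp(-v/2)`. -/
theorem char_fun_directional_clt_limit
    {E : Type*} [NormedAddCommGroup E] [InnerProductSpace ℝ E] [FiniteDimensional ℝ E]
    [MeasurableSpace E] [BorelSpace E]
    (μ : Measure E) [IsProbabilityMeasure μ] (ξ : E)
    (hmean : ∫ y, (inner ℝ ξ y : ℝ) ∂μ = 0)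
    (hmom : Integrable (fun y => (inner ℝ ξ y : ℝ) ^ 2) μ)
    (v : ℝ) (hv : v = ∫ y, (inner ℝ ξ y : ℝ) ^ 2 ∂μ)
    (χ : E → ℂ) (hχ : ∀ η : E, χ η = ∫ y, Complex.exp (((inner ℝ η y : ℝ) : ℂ) * Complex.I) ∂μ)
    (a : ℕ → ℕ) (ha : ∀ n, a n ≤ n) :
    Tendsto
      (fun n : ℕ =>
        χ ((Real.sqrt n)⁻¹ • ξ) ^ (a n) * χ (-((Real.sqrt n)⁻¹ • ξ)) ^ (n - a n))
      atTop (nhds (Complex.exp (-((v / 2 : ℝ) : ℂ)))) := by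
  set X : E → ℝ := fun y => (inner ℝ ξ y : ℝ) with hXdef
  have hXcont : Continuous X := continuous_const.inner continuous_id
  have hXint : Integrable X μ := by
    refine Integrable.mono' ((hmom.add (integrable_const 1)).div_const 2)
      hXcont.aestronglyMeasurable ?_
    filter_upwards with y
    rw [Real.norm_eq_abs]
    simp only [Pi.add_apply]
    nlinarith [sq_nonneg (|X y| - 1), _root_.sq_abs (X y)]
  have hv0 : 0 ≤ v := hv ▸ integral_nonneg fun y => sq_nonneg _
  -- the key estimate for all real t
  have key : ∀ t : ℝ,
      ‖(∫ y, Complex.exp (((t * X y : ℝ) : ℂ) * Complex.I) ∂μ) - 1 +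
          ((t ^ 2 * v : ℝ) : ℂ) / 2‖ ≤
        t ^ 2 * ∫ y, min (X y ^ 2) (|t| * (|X y| ^ 3 / 6)) ∂μ := by
    intro t
    have hf : Integrable (fun y => t * X y) μ := hXint.const_mul t
    have hf2 : Integrable (fun y => (t * X y) ^ 2) μ := by
      simp only [mul_pow]
      exact hmom.const_mul _
    have hm : ∫ y, t * X y ∂μ = 0 := by
      rw [integral_const_mul, hmean, mul_zero]
    have H := charFun_taylor_bound μ (fun y => t * X y) hf hf2 hm
    have h2 : ∫ y, (t * X y) ^ 2 ∂μ = t ^ 2 * v := by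
      rw [hv]
      simp only [mul_pow]
      rw [integral_const_mul]
    have h3 : ∫ y, min ((t * X y) ^ 2) (|t * X y| ^ 3 / 6) ∂μ =
        t ^ 2 * ∫ y, min (X y ^ 2) (|t| * (|X y| ^ 3 / 6)) ∂μ := by
      rw [← integral_const_mul]
      apply MeasureTheory.integral_congr_ae
      filter_upwards with y
      rw [mul_min_of_nonneg _ _ (sq_nonneg t)]
      congr 1
      · ring
      · rw [abs_mul, mul_pow]
        rw [show |t| ^ 3 = t ^ 2 * |t| by rw [pow_succ (|t|) 2, _root_.sq_abs]]
        ring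
    rw [h2, h3] at H
    exact H
  set c : ℕ → ℝ := fun n => (Real.sqrt n)⁻¹ with hcdef
  have hc_nonneg : ∀ n, 0 ≤ c n := fun n => inv_nonneg.mpr (Real.sqrt_nonneg _)
  have hcsq : ∀ n : ℕ, 1 ≤ n → c n ^ 2 = (n : ℝ)⁻¹ := by
    intro n hn
    rw [hcdef]
    simp only
    rw [inv_pow, Real.sq_sqrt (by positivity)]
  have hc0 : Tendsto c atTop (nhds 0) := by
    have h1 : Tendsto (fun n : ℕ => ((n : ℝ))⁻¹) atTop (nhds 0) :=
      tendsto_inv_atTop_nhds_zero_nat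
    have := (Real.continuous_sqrt.tendsto 0).comp h1
    simpa [Function.comp_def, Real.sqrt_inv] using this
  set δ : ℕ → ℝ := fun n => ∫ y, min (X y ^ 2) (c n * (|X y| ^ 3 / 6)) ∂μ with hδdef
  have hδ0 : Tendsto δ atTop (nhds 0) := by
    have := MeasureTheory.tendsto_integral_of_dominated_convergence
      (F := fun n y => min (X y ^ 2) (c n * (|X y| ^ 3 / 6))) (f := fun _ => (0 : ℝ))
      (bound := fun y => X y ^ 2) (μ := μ)
      (fun n => Continuous.aestronglyMeasurable (by fun_prop))
      hmom
      (fun n => by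
        filter_upwards with y
        rw [Real.norm_eq_abs, _root_.abs_of_nonneg
          (le_min (sq_nonneg _) (by positivity))]
        exact min_le_left _ _)
      (by
        filter_upwards with y
        have h1 : Tendsto (fun n => c n * (|X y| ^ 3 / 6)) atTop (nhds 0) := by
          simpa using hc0.mul_const (|X y| ^ 3 / 6)
        have h2 := (tendsto_const_nhds (x := X y ^ 2) (f := atTop)).min h1
        rw [min_eq_right (sq_nonneg (X y))] at h2
        exact h2)
    simpa using this
  have hz : ∀ n, ‖χ (c n • ξ) - 1 + ((c n ^ 2 * v : ℝ) : ℂ) / 2‖ ≤ c n ^ 2 * δ n := by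
    intro n
    have e : χ (c n • ξ) = ∫ y, Complex.exp (((c n * X y : ℝ) : ℂ) * Complex.I) ∂μ := by
      rw [hχ]
      apply MeasureTheory.integral_congr_ae
      filter_upwards with y
      rw [real_inner_smul_left]
    rw [e, hδdef]
    simpa [_root_.abs_of_nonneg (hc_nonneg n)] using key (c n)
  have hw : ∀ n, ‖χ (-(c n • ξ)) - 1 + ((c n ^ 2 * v : ℝ) : ℂ) / 2‖ ≤ c n ^ 2 * δ n := by
    intro n
    have e : χ (-(c n • ξ)) = ∫ y, Complex.exp ((((-(c n)) * X y : ℝ) : ℂ) * Complex.I) ∂μ := by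
      rw [hχ]
      apply MeasureTheory.integral_congr_ae
      filter_upwards with y
      rw [inner_neg_left, real_inner_smul_left]
      norm_num
      rfl
    rw [e, hδdef]
    have := key (-(c n))
    rw [neg_pow, abs_neg] at this
    simpa [_root_.abs_of_nonneg (hc_nonneg n)] using this
  -- setup for the limit argument
  set A : ℝ := v / 2 + 1 with hAdef
  have hA0 : 0 < A := by positivity
  have hδnn : ∀ n, 0 ≤ δ n := fun n =>
    integral_nonneg fun y => le_min (sq_nonneg _) (by positivity)
  have hmnorm : ∀ n : ℕ, ‖((c n ^ 2 * v : ℝ) : ℂ) / 2‖ = c n ^ 2 * v / 2 := by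
    intro n
    rw [norm_div, Complex.norm_real, Real.norm_eq_abs,
      _root_.abs_of_nonneg (by positivity)]
    simp
  have hpbound : ∀ n : ℕ, δ n ≤ 1 → ‖χ (c n • ξ) - 1‖ ≤ c n ^ 2 * A ∧
      ‖χ (-(c n • ξ)) - 1‖ ≤ c n ^ 2 * A := by
    intro n h1
    constructor
    · calc ‖χ (c n • ξ) - 1‖
          = ‖(χ (c n • ξ) - 1 + ((c n ^ 2 * v : ℝ) : ℂ) / 2) - ((c n ^ 2 * v : ℝ) : ℂ) / 2‖ := by
            ring_nf
        _ ≤ ‖χ (c n • ξ) - 1 + ((c n ^ 2 * v : ℝ) : ℂ) / 2‖ + ‖((c n ^ 2 * v : ℝ) : ℂ) / 2‖ :=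
            norm_sub_le _ _
        _ ≤ c n ^ 2 * δ n + c n ^ 2 * v / 2 := by
            refine add_le_add (hz n) ?_
            rw [hmnorm n]
        _ ≤ c n ^ 2 * A := by
            rw [hAdef]
            have := sq_nonneg (c n)
            nlinarith
    · calc ‖χ (-(c n • ξ)) - 1‖
          = ‖(χ (-(c n • ξ)) - 1 + ((c n ^ 2 * v : ℝ) : ℂ) / 2) - ((c n ^ 2 * v : ℝ) : ℂ) / 2‖ := by
            ring_nf
        _ ≤ ‖χ (-(c n • ξ)) - 1 + ((c n ^ 2 * v : ℝ) : ℂ) / 2‖ + ‖((c n ^ 2 * v : ℝ) : ℂ) / 2‖ :=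
            norm_sub_le _ _
        _ ≤ c n ^ 2 * δ n + c n ^ 2 * v / 2 := by
            refine add_le_add (hw n) ?_
            rw [hmnorm n]
        _ ≤ c n ^ 2 * A := by
            rw [hAdef]
            have := sq_nonneg (c n)
            nlinarith
  have hcsqA : Tendsto (fun n => c n ^ 2 * A) atTop (nhds 0) := by
    have : Tendsto (fun n => c n * c n) atTop (nhds 0) := by
      simpa using hc0.mul hc0
    have h2 : Tendsto (fun n => c n ^ 2) atTop (nhds 0) := by
      simpa [pow_two] using this
    simpa using h2.mul_const A
  have E1 : ∀ᶠ n : ℕ in atTop, δ n ≤ 1 := hδ0.eventually_le_const (by norm_num)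
  have E2 : ∀ᶠ n : ℕ in atTop, c n ^ 2 * A ≤ 1 / 2 := hcsqA.eventually_le_const (by norm_num)
  have E3 : ∀ᶠ n : ℕ in atTop, 1 ≤ n := eventually_ge_atTop 1
  set L : ℕ → ℂ := fun n => (a n : ℂ) * Complex.log (χ (c n • ξ)) +
      ((n - a n : ℕ) : ℂ) * Complex.log (χ (-(c n • ξ))) with hLdef
  -- the log estimate
  have hlogest : ∀ w : ℂ, ‖w - 1‖ ≤ 1 / 2 → ‖Complex.log w - (w - 1)‖ ≤ ‖w - 1‖ ^ 2 := by
    intro w hw2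
    have h1p : (1 : ℂ) + (w - 1) = w := by ring
    have hlt : ‖w - 1‖ < 1 := lt_of_le_of_lt hw2 (by norm_num)
    have := Complex.norm_log_one_add_sub_self_le hlt
    rw [h1p] at this
    refine this.trans ?_
    have hinv : (1 - ‖w - 1‖)⁻¹ ≤ 2 := by
      rw [show (2 : ℝ) = (1 / 2 : ℝ)⁻¹ by norm_num]
      apply inv_anti₀ (by norm_num)
      linarith
    calc ‖w - 1‖ ^ 2 * (1 - ‖w - 1‖)⁻¹ / 2 ≤ ‖w - 1‖ ^ 2 * 2 / 2 := by
          gcongr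
      _ = ‖w - 1‖ ^ 2 := by ring
  have hL : Tendsto L atTop (nhds (-((v / 2 : ℝ) : ℂ))) := by
    rw [tendsto_iff_norm_sub_tendsto_zero]
    refine squeeze_zero' (g := fun n : ℕ => 2 * A ^ 2 * (n : ℝ)⁻¹ + δ n)
      (Eventually.of_forall fun n => norm_nonneg _) ?_ ?_
    · filter_upwards [E1, E2, E3] with n h1 h2 h3
      obtain ⟨hp, hq⟩ := hpbound n h1
      have hn1 : (1 : ℝ) ≤ (n : ℝ) := by exact_mod_cast h3
      have hn0 : (n : ℝ) ≠ 0 := by linarith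
      have hp2 : ‖χ (c n • ξ) - 1‖ ≤ 1 / 2 := hp.trans h2
      have hq2 : ‖χ (-(c n • ξ)) - 1‖ ≤ 1 / 2 := hq.trans h2
      have hlz := hlogest _ hp2
      have hlw := hlogest _ hq2
      have hn0' : (n : ℂ) ≠ 0 := Nat.cast_ne_zero.mpr (by omega)
      have hna : ((n - a n : ℕ) : ℂ) = (n : ℂ) - (a n : ℂ) := by
        exact_mod_cast Nat.cast_sub (ha n)
      have hmn : ((a n : ℂ) + ((n - a n : ℕ) : ℂ)) * (((c n ^ 2 * v : ℝ) : ℂ) / 2)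
          = ((v / 2 : ℝ) : ℂ) := by
        rw [hna, hcsq n h3]
        push_cast
        field_simp
        ring
      have hsplit : L n - (-((v / 2 : ℝ) : ℂ)) =
          (a n : ℂ) * (Complex.log (χ (c n • ξ)) - (χ (c n • ξ) - 1)) +
          ((n - a n : ℕ) : ℂ) * (Complex.log (χ (-(c n • ξ))) - (χ (-(c n • ξ)) - 1)) +
          (a n : ℂ) * ((χ (c n • ξ) - 1) + ((c n ^ 2 * v : ℝ) : ℂ) / 2) +
          ((n - a n : ℕ) : ℂ) * ((χ (-(c n • ξ)) - 1) + ((c n ^ 2 * v : ℝ) : ℂ) / 2) := by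
        simp only [hLdef]
        linear_combination -hmn
      have hδc : c n ^ 2 * δ n = (n : ℝ)⁻¹ * δ n := by rw [hcsq n h3]
      have hcA : c n ^ 2 * A = (n : ℝ)⁻¹ * A := by rw [hcsq n h3]
      have hY1 : ‖Complex.log (χ (c n • ξ)) - (χ (c n • ξ) - 1)‖ ≤ ((n : ℝ)⁻¹ * A) ^ 2 :=
        hlz.trans (pow_le_pow_left₀ (norm_nonneg _) (hp.trans_eq hcA) 2)
      have hY2 : ‖Complex.log (χ (-(c n • ξ))) - (χ (-(c n • ξ)) - 1)‖ ≤ ((n : ℝ)⁻¹ * A) ^ 2 :=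
        hlw.trans (pow_le_pow_left₀ (norm_nonneg _) (hq.trans_eq hcA) 2)
      have hY3 : ‖(χ (c n • ξ) - 1) + ((c n ^ 2 * v : ℝ) : ℂ) / 2‖ ≤ (n : ℝ)⁻¹ * δ n :=
        (hz n).trans_eq hδc
      have hY4 : ‖(χ (-(c n • ξ)) - 1) + ((c n ^ 2 * v : ℝ) : ℂ) / 2‖ ≤ (n : ℝ)⁻¹ * δ n :=
        (hw n).trans_eq hδc
      have hsumcast : (a n : ℝ) + ((n - a n : ℕ) : ℝ) = (n : ℝ) := by
        have h := Nat.add_sub_cancel' (ha n)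
        exact_mod_cast congrArg (Nat.cast : ℕ → ℝ) h
      rw [hsplit]
      calc ‖(a n : ℂ) * (Complex.log (χ (c n • ξ)) - (χ (c n • ξ) - 1)) +
          ((n - a n : ℕ) : ℂ) * (Complex.log (χ (-(c n • ξ))) - (χ (-(c n • ξ)) - 1)) +
          (a n : ℂ) * ((χ (c n • ξ) - 1) + ((c n ^ 2 * v : ℝ) : ℂ) / 2) +
          ((n - a n : ℕ) : ℂ) * ((χ (-(c n • ξ)) - 1) + ((c n ^ 2 * v : ℝ) : ℂ) / 2)‖
          ≤ ‖(a n : ℂ) * (Complex.log (χ (c n • ξ)) - (χ (c n • ξ) - 1))‖ +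
            ‖((n - a n : ℕ) : ℂ) * (Complex.log (χ (-(c n • ξ))) - (χ (-(c n • ξ)) - 1))‖ +
            ‖(a n : ℂ) * ((χ (c n • ξ) - 1) + ((c n ^ 2 * v : ℝ) : ℂ) / 2)‖ +
            ‖((n - a n : ℕ) : ℂ) * ((χ (-(c n • ξ)) - 1) + ((c n ^ 2 * v : ℝ) : ℂ) / 2)‖ := by
            exact le_trans (norm_add_le _ _) (add_le_add (le_trans (norm_add_le _ _)
              (add_le_add (norm_add_le _ _) le_rfl)) le_rfl)
        _ ≤ (a n : ℝ) * ((n : ℝ)⁻¹ * A) ^ 2 + ((n - a n : ℕ) : ℝ) * ((n : ℝ)⁻¹ * A) ^ 2 +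
            (a n : ℝ) * ((n : ℝ)⁻¹ * δ n) + ((n - a n : ℕ) : ℝ) * ((n : ℝ)⁻¹ * δ n) := by
            simp only [norm_mul, Complex.norm_natCast]
            gcongr
        _ = (n : ℝ) * (((n : ℝ)⁻¹ * A) ^ 2 + (n : ℝ)⁻¹ * δ n) := by
            rw [← hsumcast]; ring
        _ = A ^ 2 * (n : ℝ)⁻¹ * ((n : ℝ) * (n : ℝ)⁻¹) + ((n : ℝ) * (n : ℝ)⁻¹) * δ n := by
            ring
        _ = A ^ 2 * (n : ℝ)⁻¹ + δ n := by
            rw [mul_inv_cancel₀ hn0]; ring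
        _ ≤ 2 * A ^ 2 * (n : ℝ)⁻¹ + δ n := by
            have : 0 ≤ (n : ℝ)⁻¹ := by positivity
            nlinarith [sq_nonneg A]
    · have := (tendsto_inv_atTop_nhds_zero_nat.const_mul (2 * A ^ 2)).add hδ0
      simpa using this
  have heq : ∀ᶠ n : ℕ in atTop,
      χ (c n • ξ) ^ a n * χ (-(c n • ξ)) ^ (n - a n) = Complex.exp (L n) := by
    filter_upwards [E1, E2] with n h1 h2
    obtain ⟨hp, hq⟩ := hpbound n h1
    have hz0 : χ (c n • ξ) ≠ 0 := by
      intro h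
      rw [h] at hp
      have h01 : ‖(0 : ℂ) - 1‖ = 1 := by simp
      rw [h01] at hp
      linarith [hp.trans h2]
    have hw0 : χ (-(c n • ξ)) ≠ 0 := by
      intro h
      rw [h] at hq
      have h01 : ‖(0 : ℂ) - 1‖ = 1 := by simp
      rw [h01] at hq
      linarith [hq.trans h2]
    simp only [hLdef]
    rw [Complex.exp_add, Complex.exp_nat_mul, Complex.exp_nat_mul,
      Complex.exp_log hz0, Complex.exp_log hw0]
  have hfinal := (Complex.continuous_exp.tendsto _).comp hL
  refine Tendsto.congr' ?_ hfinal
  exact heq.mono fun n h => h.symm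
end
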